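/- arXiv:2501.02323 — 9 statements merged into one kernel-verified Lean document; each statement's English description precedes it below -/
import Mathlib

section
/- Let x' be a 0–1 sequence with associated real x, and let p ∈ ℕ. If x is p-rational and x'(m) = 0 for some m > p, then x'(m) = 0 for all m > p. -/
/-- `x'` is a 0–1 sequence: defined on positive integers with values in {0,1}. -/
def IsZeroOne (x' : ℕ → ℕ) : Prop := ∀ i, 1 ≤ i → x' i = 0 ∨ x' i = 1

/-- The real number associated to a 0–1 sequence: `Σ_{i=1}^∞ x'(i)·2^{-i}`. -/
noncomputable def assocReal (x' : ℕ → ℕ) : ℝ := ∑' i : ℕ, (x' (i + 1) : ℝ) / 2 ^ (i + 1)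

/-- A real `y` is `p`-rational if `y·2^p` is a natural number. -/
def IsPRational (p : ℕ) (y : ℝ) : Prop := ∃ q : ℕ, y * 2 ^ p = (q : ℝ)

lemma one_summable : Summable (fun i : ℕ => (1:ℝ)/2^(i+1)) := by
  have h : Summable (fun n : ℕ => (1/2:ℝ)^(n+1)) :=
    (summable_nat_add_iff 1).mpr summable_geometric_two
  simpa [div_pow] using h

lemma one_tsum : ∑' i : ℕ, (1:ℝ)/2^(i+1) = 1 := by
  conv_rhs => rw [← tsum_geometric_two' 1]
  apply tsum_congr
  intro n
  rw [pow_succ', div_div]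

lemma zo_le (x' : ℕ → ℕ) (hx' : IsZeroOne x') (i : ℕ) : (x' (i+1) : ℝ) ≤ 1 := by
  rcases hx' (i+1) (Nat.le_add_left 1 i) with h | h <;> simp [h]

lemma summ (x' : ℕ → ℕ) (hx' : IsZeroOne x') :
    Summable (fun i : ℕ => (x' (i+1) : ℝ)/2^(i+1)) := by
  apply Summable.of_nonneg_of_le (fun i => by positivity) _ one_summable
  intro i
  have := zo_le x' hx' i
  gcongr

/-- If `x` is `p`-rational and `x'(m) = 0` for some `m > p`, then `x'(m) = 0`
for all `m > p`. -/
theorem stmt2 (x' : ℕ → ℕ) (hx' : IsZeroOne x') (x : ℝ) (hx : x = assocReal x')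
    (p : ℕ) (hrat : IsPRational p x) (hsome : ∃ m, p < m ∧ x' m = 0) :
    ∀ m, p < m → x' m = 0 := by
  obtain ⟨q, hq⟩ := hrat
  set y' : ℕ → ℕ := fun n => x' (n + p) with hy'
  have hy'zo : IsZeroOne y' := by
    intro i hi
    exact hx' (i + p) (le_trans hi (Nat.le_add_right i p))
  have hsy : Summable (fun i : ℕ => (y' (i+1) : ℝ)/2^(i+1)) := summ y' hy'zo
  set t : ℝ := ∑' i : ℕ, (y' (i+1) : ℝ)/2^(i+1) with ht
  have hs : Summable (fun i : ℕ => (x' (i+1) : ℝ)/2^(i+1)) := summ x' hx'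
  -- split x at p
  have hsplit : x = (∑ i ∈ Finset.range p, (x' (i+1) : ℝ)/2^(i+1))
      + ∑' i : ℕ, (x' (i + p + 1) : ℝ)/2^(i + p + 1) := by
    rw [hx, assocReal, ← Summable.sum_add_tsum_nat_add p hs]
  set N : ℕ := ∑ i ∈ Finset.range p, x' (i+1) * 2^(p - 1 - i) with hN
  have hhead : (∑ i ∈ Finset.range p, (x' (i+1) : ℝ)/2^(i+1)) * 2^p = (N : ℝ) := by
    rw [Finset.sum_mul, hN, Nat.cast_sum]
    apply Finset.sum_congr rfl
    intro i hi
    have hip : i < p := Finset.mem_range.mp hi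
    have hpow : (2:ℝ)^p = 2^(i+1) * 2^(p-1-i) := by
      rw [← pow_add]; congr 1; omega
    push_cast
    rw [hpow]
    field_simp
  have htail : (∑' i : ℕ, (x' (i + p + 1) : ℝ)/2^(i + p + 1)) * 2^p = t := by
    rw [← tsum_mul_right, ht]
    apply tsum_congr
    intro i
    have hyx : y' (i+1) = x' (i + p + 1) := by simp only [hy']; ring_nf
    rw [hyx]
    have hpow : (2:ℝ)^(i+p+1) = 2^(i+1) * 2^p := by rw [← pow_add]; ring_nf
    rw [hpow]
    field_simp
  have hqNt : (q : ℝ) = N + t := by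
    rw [← hq, hsplit, add_mul, hhead, htail]
  -- 0 ≤ t
  have ht0 : 0 ≤ t := tsum_nonneg (fun i => by positivity)
  -- t < 1
  obtain ⟨m, hm, hm0⟩ := hsome
  have ht1 : t < 1 := by
    rw [← one_tsum, ht]
    have hzero : y' (m - p - 1 + 1) = 0 := by
      show x' (m - p - 1 + 1 + p) = 0
      have hk : m - p - 1 + 1 + p = m := by omega
      rw [hk]; exact hm0
    refine Summable.tsum_lt_tsum (i := m - p - 1) (fun i => ?_) ?_ hsy one_summable
    · have := zo_le y' hy'zo i
      gcongr
    · simp only [hzero, Nat.cast_zero, zero_div]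
      positivity
  -- t is an integer, hence t = 0
  have htz : t = 0 := by
    have h1 : (((q : ℤ) - (N : ℤ) : ℤ) : ℝ) = t := by push_cast; linarith
    have h4 : (0:ℤ) ≤ (q : ℤ) - N := by
      have := ht0; rw [← h1] at this; exact_mod_cast this
    have h5 : (q : ℤ) - N < 1 := by
      have := ht1; rw [← h1] at this; exact_mod_cast this
    have hz : (q : ℤ) - N = 0 := by omega
    rw [← h1, hz]; simp
  -- conclude
  intro m' hm'
  have hle : (y' (m' - p - 1 + 1) : ℝ)/2^(m' - p - 1 + 1) ≤ t :=
    Summable.le_tsum hsy (m' - p - 1) (fun j _ => by positivity)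
  have hge : (0:ℝ) ≤ (y' (m' - p - 1 + 1) : ℝ)/2^(m' - p - 1 + 1) := by positivity
  have heq : (y' (m' - p - 1 + 1) : ℝ)/2^(m' - p - 1 + 1) = 0 :=
    le_antisymm (htz ▸ hle) hge
  have h0 : y' (m' - p - 1 + 1) = 0 := by
    field_simp at heq
    exact_mod_cast heq
  have h0' : x' (m' - p - 1 + 1 + p) = 0 := h0
  have hidx : m' - p - 1 + 1 + p = m' := by omega
  rwa [hidx] at h0'
end

section
/- Let x' be a 0–1 sequence with associated real x, let p ≥ 1, and assume x'(i) = 0 for some i > p. If there exists a real number y which is (p−1)-rational and satisfies 0 < x − y < 1/2^p, then x'(p) = 0. -/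
/-- If `x'(i) = 0` for some `i > p` and there is a `(p-1)`-rational `y` with
`0 < x - y < 1/2^p`, then `x'(p) = 0`. -/
theorem stmt5 (x' : ℕ → ℕ) (hx' : IsZeroOne x') (x : ℝ) (hx : x = assocReal x')
    (p : ℕ) (hp : 1 ≤ p) (hsome : ∃ i, p < i ∧ x' i = 0)
    (hy : ∃ y : ℝ, IsPRational (p - 1) y ∧ 0 < x - y ∧ x - y < 1 / 2 ^ p) :
    x' p = 0 := by
  obtain ⟨y, ⟨q, hq⟩, hlt, hub⟩ := hy
  obtain ⟨j, hjp, hj0⟩ := hsome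
  set f : ℕ → ℝ := fun i => (x' (i + 1) : ℝ) / 2 ^ (i + 1) with hf
  have hb : ∀ i : ℕ, (x' (i + 1) : ℝ) ≤ 1 := by
    intro i
    rcases hx' (i + 1) (by omega) with h | h <;> simp [h]
  have hgsum : Summable (fun i : ℕ => (1 : ℝ) / 2 / 2 ^ i) := summable_geometric_two' 1
  have hfle : ∀ i : ℕ, f i ≤ (1 : ℝ) / 2 / 2 ^ i := by
    intro i
    have h1 : (1 : ℝ) / 2 / 2 ^ i = 1 / 2 ^ (i + 1) := by ring
    rw [h1]
    show (x' (i + 1) : ℝ) / 2 ^ (i + 1) ≤ 1 / 2 ^ (i + 1)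
    gcongr
    exact hb i
  have hfnn : ∀ i : ℕ, 0 ≤ f i := fun i => by positivity
  have hfs : Summable f := Summable.of_nonneg_of_le hfnn hfle hgsum
  have hdec := Summable.sum_add_tsum_nat_add p hfs
  set N : ℕ := ∑ i ∈ Finset.range p, x' (i + 1) * 2 ^ (p - 1 - i) with hN
  set t : ℝ := ∑' i : ℕ, (x' (i + p + 1) : ℝ) / 2 ^ (i + 1) with ht
  have hkey : x * 2 ^ p = (N : ℝ) + t := by
    rw [hx, assocReal, ← hdec, add_mul]
    congr 1
    · rw [Finset.sum_mul, hN]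
      push_cast
      apply Finset.sum_congr rfl
      intro i hi
      have hip : i < p := Finset.mem_range.mp hi
      have h2 : (2 : ℝ) ^ p = 2 ^ (i + 1) * 2 ^ (p - 1 - i) := by
        rw [← pow_add]; congr 1; omega
      show (x' (i + 1) : ℝ) / 2 ^ (i + 1) * 2 ^ p = (x' (i + 1) : ℝ) * 2 ^ (p - 1 - i)
      rw [h2]
      field_simp
      try ring
    · rw [← tsum_mul_right, ht]
      apply tsum_congr
      intro i
      have h2 : (2 : ℝ) ^ (i + p + 1) = 2 ^ (i + 1) * 2 ^ p := by
        rw [← pow_add]; congr 1; omega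
      show (x' (i + p + 1) : ℝ) / 2 ^ (i + p + 1) * 2 ^ p = _
      rw [h2]
      field_simp
      try ring
  have ht0 : 0 ≤ t := tsum_nonneg (fun i => by positivity)
  have ht1 : t < 1 := by
    have hTle : ∀ i : ℕ, (x' (i + p + 1) : ℝ) / 2 ^ (i + 1) ≤ (1 : ℝ) / 2 / 2 ^ i := by
      intro i
      have h1 : (1 : ℝ) / 2 / 2 ^ i = 1 / 2 ^ (i + 1) := by ring
      rw [h1]
      gcongr
      rcases hx' (i + p + 1) (by omega) with h | h <;> simp [h]
    have hTs : Summable (fun i : ℕ => (x' (i + p + 1) : ℝ) / 2 ^ (i + 1)) :=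
      Summable.of_nonneg_of_le (fun i => by positivity) hTle hgsum
    have hstrict : (x' ((j - p - 1) + p + 1) : ℝ) / 2 ^ ((j - p - 1) + 1)
        < (1 : ℝ) / 2 / 2 ^ (j - p - 1) := by
      have hjj : (j - p - 1) + p + 1 = j := by omega
      rw [hjj, hj0]
      norm_num
    have hlt' := Summable.tsum_lt_tsum hTle hstrict hTs hgsum
    rwa [tsum_geometric_two'] at hlt'
  have h2p : (0 : ℝ) < 2 ^ p := by positivity
  have hyp : y * 2 ^ p = 2 * q := by
    have h2 : (2 : ℝ) ^ p = 2 ^ (p - 1) * 2 := by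
      rw [← pow_succ]; congr 1; omega
    rw [h2, ← mul_assoc, hq]; ring
  have h1 : (2 * q : ℝ) < (N : ℝ) + t := by
    have hyx : y < x := by linarith
    have := mul_lt_mul_of_pos_right hyx h2p
    rw [hyp, hkey] at this
    exact this
  have h2 : (N : ℝ) + t < 2 * q + 1 := by
    have hxo : x < y + 1 / 2 ^ p := by linarith
    have := mul_lt_mul_of_pos_right hxo h2p
    rw [hkey, add_mul, hyp] at this
    have h1p : 1 / (2 : ℝ) ^ p * 2 ^ p = 1 := by field_simp
    rw [h1p] at this
    exact this
  have hNle : N ≤ 2 * q := by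
    have : (N : ℝ) < 2 * q + 1 := by linarith
    exact_mod_cast Nat.lt_succ_iff.mp (by exact_mod_cast this)
  have hNge : 2 * q ≤ N := by
    have : (2 * q : ℝ) < (N : ℝ) + 1 := by linarith
    have : 2 * q < N + 1 := by exact_mod_cast this
    omega
  have hNeq : N = 2 * q := by omega
  -- parity of N
  have hsplit : N = (∑ i ∈ Finset.range (p - 1), x' (i + 1) * 2 ^ (p - 1 - i)) + x' p := by
    have hp1 : Finset.range p = Finset.range ((p - 1) + 1) := by congr 1; omega
    rw [hN, hp1, Finset.sum_range_succ]
    congr 1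
    rw [Nat.sub_self, pow_zero, mul_one]
    congr 1
    omega
  have hdvd : 2 ∣ ∑ i ∈ Finset.range (p - 1), x' (i + 1) * 2 ^ (p - 1 - i) := by
    apply Finset.dvd_sum
    intro i hi
    have hip : i < p - 1 := Finset.mem_range.mp hi
    have h1 : 1 ≤ p - 1 - i := by omega
    exact Dvd.dvd.mul_left (dvd_pow_self 2 (by omega : p - 1 - i ≠ 0)) _
  rcases hx' p hp with h | h
  · exact h
  · exfalso
    obtain ⟨m, hm⟩ := hdvd
    omega
end

section
/- Let x' be a 0–1 sequence with associated real x, let p ≥ 1, and assume x'(i) = 0 for some i > p. If y is a real number which is (p−1)-rational and satisfies 0 < x − y < 1/2^p, then y = Σ_{i=1}^{p−1} x'(i)·2^{−i}; in particular such a y is unique, and its binary expansion agrees with x' at every index below p. -/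
/-- If `x'(i) = 0` for some `i > p` and `y` is `(p-1)`-rational with
`0 < x - y < 1/2^p`, then `y = Σ_{i=1}^{p-1} x'(i)·2^{-i}`; in particular such a `y`
is unique and its binary expansion agrees with `x'` below `p`. -/
theorem stmt6 (x' : ℕ → ℕ) (hx' : IsZeroOne x') (x : ℝ) (hx : x = assocReal x')
    (p : ℕ) (hp : 1 ≤ p) (hsome : ∃ i, p < i ∧ x' i = 0)
    (y : ℝ) (hyrat : IsPRational (p - 1) y) (hy1 : 0 < x - y) (hy2 : x - y < 1 / 2 ^ p) :
    y = ∑ i ∈ Finset.Icc 1 (p - 1), (x' i : ℝ) / 2 ^ i := by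
  obtain ⟨q, hq⟩ := hyrat
  set n := p - 1 with hn
  have hpn : p = n + 1 := (Nat.succ_pred_eq_of_pos hp).symm
  set f : ℕ → ℝ := fun i => (x' (i + 1) : ℝ) / 2 ^ (i + 1) with hf
  have hfnn : ∀ i, 0 ≤ f i := fun i => by positivity
  have hfle : ∀ i, f i ≤ (1/2 : ℝ) ^ (i + 1) := by
    intro i
    rcases hx' (i+1) (Nat.le_add_left 1 i) with h | h <;>
      simp [hf, h, one_div, inv_pow]
  have hgeo : Summable (fun i : ℕ => (1/2 : ℝ) ^ i) :=
    summable_geometric_of_lt_one (by norm_num) (by norm_num)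
  have hgsum : Summable (fun i : ℕ => (1/2 : ℝ) ^ (i + 1)) := by
    exact (hgeo.mul_right (1/2)).congr (fun i => (pow_succ _ _).symm)
  have hsum : Summable f := Summable.of_nonneg_of_le hfnn hfle hgsum
  have hsplit := Summable.sum_add_tsum_nat_add n hsum
  set T := ∑' i, f (i + n) with hT
  have hT0 : 0 ≤ T := tsum_nonneg (fun i => hfnn _)
  have hTle : T ≤ (1/2 : ℝ) ^ n := by
    have h1 : T ≤ ∑' i : ℕ, (1/2 : ℝ) ^ (i + n + 1) := by
      refine Summable.tsum_le_tsum (fun i => hfle _) ((summable_nat_add_iff n).2 hsum) ?_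
      exact (hgeo.mul_right ((1/2:ℝ)^n * (1/2))).congr (fun i => by rw [pow_add, pow_succ]; ring)
    have h2 : ∑' i : ℕ, (1/2 : ℝ) ^ (i + n + 1) = (1/2 : ℝ) ^ n := by
      have : ∀ i : ℕ, (1/2 : ℝ) ^ (i + n + 1) = (1/2:ℝ)^i * ((1/2:ℝ)^n * (1/2)) := by
        intro i; ring
      rw [tsum_congr this, tsum_mul_right, tsum_geometric_of_lt_one (by norm_num) (by norm_num)]
      ring
    linarith
  set s := ∑ i ∈ Finset.Icc 1 n, (x' i : ℝ) / 2 ^ i with hs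
  have hrange : ∑ i ∈ Finset.range n, f i = s := by
    rw [hs, ← Finset.Ico_add_one_right_eq_Icc, Finset.sum_Ico_eq_sum_range]
    simp [hf, Nat.add_comm]
  have hx_eq : x = s + T := by
    rw [hx, assocReal, ← hsplit, hrange]
  set N : ℕ := ∑ i ∈ Finset.Icc 1 n, x' i * 2 ^ (n - i) with hN
  have hsN : s * 2 ^ n = (N : ℝ) := by
    rw [hs, hN, Finset.sum_mul]
    push_cast
    apply Finset.sum_congr rfl
    intro i hi
    have hin : i ≤ n := (Finset.mem_Icc.mp hi).2
    have h2 : (2:ℝ) ^ n = 2 ^ (n - i) * 2 ^ i := by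
      rw [← pow_add]; congr 1; omega
    rw [h2]
    field_simp
  have hys : y - s = T - (x - y) := by linarith
  have hlt1 : (y - s) * 2 ^ n < 1 := by
    have : y - s < (1/2:ℝ)^n := by linarith
    have h2 : (0:ℝ) < 2 ^ n := by positivity
    calc (y - s) * 2 ^ n < (1/2:ℝ)^n * 2^n := by nlinarith
      _ = 1 := by rw [← mul_pow]; norm_num
  have hgt : (-1 : ℝ) < (y - s) * 2 ^ n := by
    have hyb : y - s > -(1 / 2 ^ p) := by linarith
    have h2 : (0:ℝ) < 2 ^ n := by positivity
    have hhp : (1 / (2:ℝ) ^ p) * 2 ^ n = 1/2 := by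
      rw [hpn, pow_succ]; field_simp
    nlinarith
  have hqn : ((q : ℤ) - (N : ℤ) : ℝ) = (y - s) * 2 ^ n := by
    push_cast
    rw [sub_mul, hsN]
    rw [hn] at hq
    linarith [hq]
  have hz : (q : ℤ) - (N : ℤ) = 0 := by
    have habs : |((q : ℤ) - (N : ℤ) : ℝ)| < 1 := by
      rw [abs_lt]; constructor <;> [skip; skip] <;> rw [hqn] <;> linarith
    have h2 : |(q : ℤ) - (N : ℤ)| < 1 := by
      rw [← Int.cast_sub, ← Int.cast_abs] at habs
      exact_mod_cast habs
    exact Int.abs_lt_one_iff.mp h2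
  have hqN : (q : ℝ) = (N : ℝ) := by
    have : (q : ℤ) = (N : ℤ) := by omega
    exact_mod_cast this
  have h2 : (0:ℝ) < 2 ^ n := by positivity
  have : y * 2 ^ n = s * 2 ^ n := by
    rw [hsN, ← hqN, ← hq, hn]
  have := mul_right_cancel₀ (ne_of_gt h2) this
  exact this
end

section
/- Let x' be an alternating 0–1 sequence with associated real x. Then for every m ∈ ℕ, the predicate [x, 4m+3] fails: there is no real y which is (4m+2)-rational and satisfies 0 < x − y < 1/2^{4m+3}. -/
/-- The predicate `[x, p]` (for `p ≥ 1`): there is a `(p-1)`-rational `y` with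
`0 < x - y < 1/2^p`. -/
def BracketPred (x : ℝ) (p : ℕ) : Prop :=
  ∃ y : ℝ, IsPRational (p - 1) y ∧ 0 < x - y ∧ x - y < 1 / 2 ^ p

/-- A 0–1 sequence is alternating if `x'(4m+1) = 0` and `x'(4m+3) = 1` for all `m`. -/
def Alternating (x' : ℕ → ℕ) : Prop := ∀ m : ℕ, x' (4 * m + 1) = 0 ∧ x' (4 * m + 3) = 1

/-- If `x'` is alternating, then `[x, 4m+3]` fails for every `m`. -/
theorem stmt10 (x' : ℕ → ℕ) (hx' : IsZeroOne x') (x : ℝ) (hx : x = assocReal x')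
    (halt : Alternating x') :
    ∀ m : ℕ, ¬ BracketPred x (4 * m + 3) := by
  intro m hb
  obtain ⟨y, ⟨q, hq⟩, h1, h2⟩ := hb
  set p : ℕ := 4 * m + 3 with hp
  have hle : ∀ i : ℕ, (x' (i + 1) : ℝ) / 2 ^ (i + 1) ≤ (1:ℝ) / 2 ^ (i + 1) := by
    intro i
    have := hx' (i + 1) (Nat.le_add_left 1 i)
    rcases this with h | h <;> simp [h] <;> positivity
  have hpos : ∀ i : ℕ, (0:ℝ) ≤ (x' (i + 1) : ℝ) / 2 ^ (i + 1) := by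
    intro i; positivity
  have hgeo : Summable (fun i : ℕ => (1:ℝ) / 2 ^ (i + 1)) := by
    have h := summable_geometric_two.mul_right (1/2 : ℝ)
    refine h.congr fun i => ?_
    rw [pow_succ]
    field_simp
    rw [← mul_pow]; norm_num
  have hsum : Summable (fun i : ℕ => (x' (i + 1) : ℝ) / 2 ^ (i + 1)) :=
    Summable.of_nonneg_of_le hpos hle hgeo
  -- split the series
  have hsplit := Summable.sum_add_tsum_nat_add p hsum
  set T : ℝ := ∑' i : ℕ, (x' (i + p + 1) : ℝ) / 2 ^ (i + p + 1) with hT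
  have hxeq : x = (∑ i ∈ Finset.range p, (x' (i + 1) : ℝ) / 2 ^ (i + 1)) + T := by
    rw [hx, assocReal, ← hsplit]
  -- tail bounds
  have htail_sum : Summable (fun i : ℕ => (x' (i + p + 1) : ℝ) / 2 ^ (i + p + 1)) := by
    simpa using (summable_nat_add_iff p).2 hsum
  have hT0 : 0 ≤ T := tsum_nonneg (fun i => by positivity)
  have hgeo2 : Summable (fun i : ℕ => (1:ℝ) / 2 ^ (i + p + 1)) := by
    simpa using (summable_nat_add_iff p).2 hgeo
  have hgeoval : (∑' i : ℕ, (1:ℝ) / 2 ^ (i + p + 1)) = 1 / 2 ^ p := by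
    have h1 : (fun i : ℕ => (1:ℝ) / 2 ^ (i + p + 1)) =
        fun i : ℕ => (1/2 : ℝ) ^ i * (1/2) ^ (p + 1) := by
      funext i
      rw [div_pow, div_pow, one_pow, one_pow, div_mul_div_comm, one_mul, ← pow_add, add_assoc]
    rw [h1, tsum_mul_right, tsum_geometric_two]
    rw [div_pow, one_pow, pow_succ]
    ring
  have hT1 : T ≤ 1 / 2 ^ p := by
    calc T ≤ ∑' i : ℕ, (1:ℝ) / 2 ^ (i + p + 1) :=
          Summable.tsum_le_tsum (fun i => by
            have := hx' (i + p + 1) (Nat.le_add_left 1 (i + p))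
            rcases this with h | h <;> simp [h] <;> positivity) htail_sum hgeo2
      _ = 1 / 2 ^ p := hgeoval
  -- the partial sum times 2^p is a natural number N
  set N : ℕ := ∑ i ∈ Finset.range p, x' (i + 1) * 2 ^ (p - 1 - i) with hN
  have hSN : (∑ i ∈ Finset.range p, (x' (i + 1) : ℝ) / 2 ^ (i + 1)) * 2 ^ p = (N : ℝ) := by
    rw [hN, Finset.sum_mul]
    push_cast
    refine Finset.sum_congr rfl fun i hi => ?_
    have hi' : i < p := Finset.mem_range.1 hi
    have h2p : (2:ℝ) ^ p = 2 ^ (i + 1) * 2 ^ (p - 1 - i) := by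
      rw [← pow_add]; congr 1; omega
    rw [h2p]
    field_simp
  -- N is odd
  have hNodd : N % 2 = 1 := by
    have hps : p = (4 * m + 2) + 1 := by omega
    rw [hN, hps, Finset.sum_range_succ]
    have hlast : x' (4 * m + 2 + 1) * 2 ^ ((4 * m + 2 + 1) - 1 - (4 * m + 2)) = 1 := by
      have := (halt m).2
      have h3 : 4 * m + 2 + 1 = 4 * m + 3 := by omega
      rw [h3, this]
      norm_num
    rw [hlast]
    have heven : 2 ∣ ∑ i ∈ Finset.range (4 * m + 2), x' (i + 1) * 2 ^ ((4 * m + 2 + 1) - 1 - i) := by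
      refine Finset.dvd_sum fun i hi => ?_
      have hi' : i < 4 * m + 2 := Finset.mem_range.1 hi
      have h : (4 * m + 2 + 1) - 1 - i = (4 * m + 1 - i) + 1 := by omega
      rw [h, pow_succ]
      exact ⟨x' (i + 1) * 2 ^ (4 * m + 1 - i), by ring⟩
    omega
  -- y = 2q / 2^p
  have hppos : (0:ℝ) < 2 ^ p := by positivity
  have hyval : y * 2 ^ p = 2 * q := by
    have hps : p = (p - 1) + 1 := by omega
    rw [hps, pow_succ, ← mul_assoc, hq]
    ring
  -- final contradiction
  have hxN : x * 2 ^ p = (N : ℝ) + T * 2 ^ p := by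
    rw [hxeq, add_mul, hSN]
  have hT2 : T * 2 ^ p ≤ 1 := by
    calc T * 2 ^ p ≤ (1 / 2 ^ p) * 2 ^ p := by nlinarith
      _ = 1 := by field_simp
  have hlb : (2 * q : ℝ) < x * 2 ^ p := by
    have := mul_lt_mul_of_pos_right (by linarith : y < x) hppos
    linarith [hyval]
  have hub : x * 2 ^ p < 2 * q + 1 := by
    have := mul_lt_mul_of_pos_right h2 hppos
    rw [sub_mul, div_mul_cancel₀] at this
    · linarith [hyval]
    · positivity
  have hTp0 : 0 ≤ T * 2 ^ p := by positivity
  -- N ≤ 2q from N ≤ x*2^p < 2q+1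
  have hN2q : (N : ℝ) < 2 * q + 1 := by linarith
  have hNle : N ≤ 2 * q := by exact_mod_cast Nat.lt_succ_iff.mp (by exact_mod_cast hN2q)
  have hNne : N ≠ 2 * q := fun h => by omega
  have hNle' : N + 1 ≤ 2 * q := by omega
  have : x * 2 ^ p ≤ (N : ℝ) + 1 := by linarith
  have : x * 2 ^ p ≤ (2 * q : ℝ) := by
    have : ((N : ℝ) + 1) ≤ (2 * q : ℝ) := by exact_mod_cast hNle'
    linarith
  linarith
end

section
/- Let x' be a 0–1 sequence with associated real x, and let p ≥ 1. Then the following are equivalent: (a) x'(4m+1) = 0 and x'(4m+3) = 1 for all m ∈ ℕ, and x'(p) = 0; (b) for all m ∈ ℕ, [x, 4m+1] holds and [x, 4m+3] fails, and [x, p] holds. -/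
namespace Stmt11Aux

/-- The tail of the associated real after position `p`, scaled. -/
noncomputable def T (x' : ℕ → ℕ) (p : ℕ) : ℝ := assocReal (fun i => x' (p + i))

/-- The head: integer part data. -/
def N (x' : ℕ → ℕ) (p : ℕ) : ℕ := ∑ i ∈ Finset.range p, x' (i + 1) * 2 ^ (p - 1 - i)

lemma summable_aux (x' : ℕ → ℕ) (hx' : IsZeroOne x') :
    Summable (fun i : ℕ => (x' (i + 1) : ℝ) / 2 ^ (i + 1)) := by
  apply Summable.of_nonneg_of_le (fun i => by positivity) (fun i => ?_)
    (summable_geometric_two.mul_right (1 / 2))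
  have h1 : x' (i + 1) ≤ 1 := by rcases hx' (i + 1) (by omega) with h | h <;> omega
  have h2 : (x' (i + 1) : ℝ) ≤ 1 := by exact_mod_cast h1
  have h3 : (0:ℝ) < 2 ^ (i + 1) := by positivity
  calc (x' (i + 1) : ℝ) / 2 ^ (i + 1) ≤ 1 / 2 ^ (i + 1) := by gcongr
    _ = (1 / 2) ^ i * (1 / 2) := by rw [one_div_pow, pow_succ]; ring

lemma shift_zeroone (x' : ℕ → ℕ) (hx' : IsZeroOne x') (p : ℕ) :
    IsZeroOne (fun i => x' (p + i)) := fun i hi => hx' (p + i) (by omega)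

lemma assocReal_nonneg (x' : ℕ → ℕ) : 0 ≤ assocReal x' :=
  tsum_nonneg (fun i => by positivity)

lemma tsum_pow_half : ∑' i : ℕ, (1 : ℝ) / 2 ^ (i + 1) = 1 := by
  have : (fun i : ℕ => (1 : ℝ) / 2 ^ (i + 1)) = fun i : ℕ => (1 / 2 : ℝ) ^ i * (1 / 2) := by
    funext i; rw [one_div_pow, pow_succ]; ring
  rw [this, tsum_mul_right, tsum_geometric_two]; norm_num

lemma compl_sum (x' : ℕ → ℕ) (hx' : IsZeroOne x') :
    assocReal x' + assocReal (fun i => 1 - x' i) = 1 := by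
  have hs1 := summable_aux x' hx'
  have hc : IsZeroOne (fun i => 1 - x' i) := by
    intro i hi; rcases hx' i hi with h | h <;> simp [h]
  have hs2 := summable_aux _ hc
  unfold assocReal
  rw [← Summable.tsum_add hs1 hs2, ← tsum_pow_half]
  congr 1; funext i
  have h1 : x' (i + 1) ≤ 1 := by rcases hx' (i + 1) (by omega) with h | h <;> omega
  have : ((1 - x' (i + 1) : ℕ) : ℝ) = 1 - (x' (i + 1) : ℝ) := by
    push_cast [h1]; ring
  rw [this]; ring

lemma assocReal_le_one (x' : ℕ → ℕ) (hx' : IsZeroOne x') : assocReal x' ≤ 1 := by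
  have := compl_sum x' hx'
  have h2 := assocReal_nonneg (fun i => 1 - x' i)
  linarith

lemma pos_of_one (x' : ℕ → ℕ) (hx' : IsZeroOne x') (k : ℕ) (hk : 1 ≤ k)
    (h : x' k = 1) : 0 < assocReal x' := by
  have hs := summable_aux x' hx'
  have hle := Summable.le_tsum hs (k - 1) (fun j _ => by positivity)
  have hk1 : k - 1 + 1 = k := by omega
  rw [hk1, h] at hle
  have : (0:ℝ) < (1 : ℝ) / 2 ^ k := by positivity
  calc (0:ℝ) < (1:ℝ) / 2 ^ k := this
    _ = ((1:ℕ) : ℝ) / 2 ^ k := by norm_num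
    _ ≤ assocReal x' := hle

lemma lt_one_of_zero (x' : ℕ → ℕ) (hx' : IsZeroOne x') (k : ℕ) (hk : 1 ≤ k)
    (h : x' k = 0) : assocReal x' < 1 := by
  have hc : IsZeroOne (fun i => 1 - x' i) := by
    intro i hi; rcases hx' i hi with h' | h' <;> simp [h']
  have hpos : 0 < assocReal (fun i => 1 - x' i) :=
    pos_of_one _ hc k hk (by simp [h])
  have := compl_sum x' hx'
  linarith

lemma T_nonneg (x' : ℕ → ℕ) (p : ℕ) : 0 ≤ T x' p := assocReal_nonneg _

lemma T_le_one (x' : ℕ → ℕ) (hx' : IsZeroOne x') (p : ℕ) : T x' p ≤ 1 :=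
  assocReal_le_one _ (shift_zeroone x' hx' p)

/-- Key identity: `x · 2^p = N p + T p`. -/
lemma key (x' : ℕ → ℕ) (hx' : IsZeroOne x') (p : ℕ) :
    assocReal x' * 2 ^ p = (N x' p : ℝ) + T x' p := by
  have hs := summable_aux x' hx'
  have hsplit := Summable.sum_add_tsum_nat_add p hs
  unfold assocReal at *
  rw [← hsplit, add_mul]
  congr 1
  · rw [Finset.sum_mul]
    unfold N
    push_cast
    apply Finset.sum_congr rfl
    intro i hi
    have hi' : i < p := Finset.mem_range.1 hi
    have h2 : (2:ℝ) ^ (p - 1 - i) * 2 ^ (i + 1) = 2 ^ p := by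
      rw [← pow_add]; congr 1; omega
    have h3 : (0:ℝ) < 2 ^ (i + 1) := by positivity
    field_simp
    rw [mul_comm ((x' (i+1):ℝ)) (2 ^ p), ← h2]; ring
  · unfold T assocReal
    rw [← tsum_mul_right]
    congr 1; funext i
    have h2 : (2:ℝ) ^ (i + p + 1) = 2 ^ (i + 1) * 2 ^ p := by
      rw [← pow_add]; congr 1; omega
    show (x' (i + p + 1) : ℝ) / 2 ^ (i + p + 1) * 2 ^ p = (x' (p + (i + 1)) : ℝ) / 2 ^ (i + 1)
    have h3 : p + (i + 1) = i + p + 1 := by omega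
    rw [h3, h2]
    have h4 : (0:ℝ) < 2 ^ (i + 1) := by positivity
    have h5 : (0:ℝ) < 2 ^ p := by positivity
    field_simp

lemma parity (x' : ℕ → ℕ) (p : ℕ) (hp : 1 ≤ p) :
    ∃ M : ℕ, N x' p = 2 * M + x' p := by
  obtain ⟨q, rfl⟩ : ∃ q, p = q + 1 := ⟨p - 1, by omega⟩
  unfold N
  rw [Finset.sum_range_succ]
  have h1 : q + 1 - 1 - q = 0 := by omega
  rw [h1, pow_zero, mul_one]
  refine ⟨∑ i ∈ Finset.range q, x' (i + 1) * 2 ^ (q - 1 - i), ?_⟩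
  rw [Finset.mul_sum]
  congr 1
  apply Finset.sum_congr rfl
  intro i hi
  have hi' : i < q := Finset.mem_range.1 hi
  have : q + 1 - 1 - i = (q - 1 - i) + 1 := by omega
  rw [this, pow_succ]; ring

/-- `BracketPred` in arithmetic form. -/
lemma bracket_arith (x : ℝ) (k : ℕ) (hk : 1 ≤ k) :
    BracketPred x k ↔ ∃ q : ℕ, (2 * q : ℝ) < x * 2 ^ k ∧ x * 2 ^ k < 2 * q + 1 := by
  have hk1 : k - 1 + 1 = k := by omega
  have h2k : (0:ℝ) < 2 ^ k := by positivity
  have h2k' : (2:ℝ) ^ k = 2 ^ (k - 1) * 2 := by rw [← pow_succ, hk1]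
  constructor
  · rintro ⟨y, ⟨q, hy⟩, h1, h2⟩
    have hy2 : y * 2 ^ k = 2 * q := by rw [h2k', ← mul_assoc, hy]; ring
    have e1 : (x - y) * 2 ^ k < (1 / 2 ^ k) * 2 ^ k := mul_lt_mul_of_pos_right h2 h2k
    have e2 : 0 < (x - y) * 2 ^ k := mul_pos h1 h2k
    have e3 : (1 / 2 ^ k : ℝ) * 2 ^ k = 1 := by field_simp
    have e4 : (x - y) * 2 ^ k = x * 2 ^ k - 2 * q := by rw [sub_mul, hy2]
    exact ⟨q, by linarith, by linarith⟩
  · rintro ⟨q, h1, h2⟩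
    have hrep : x - 2 * q / 2 ^ k = (x * 2 ^ k - 2 * q) / 2 ^ k := by
      field_simp
    refine ⟨2 * q / 2 ^ k, ⟨q, ?_⟩, ?_, ?_⟩
    · rw [div_mul_eq_mul_div, h2k', div_eq_iff (by positivity)]
      ring
    · rw [hrep]
      exact div_pos (by linarith) h2k
    · rw [hrep, div_lt_div_iff₀ h2k h2k]
      have := mul_lt_mul_of_pos_right (show x * 2 ^ k - 2 * q < 1 by linarith) h2k
      linarith

/-- Central characterization of the bracket predicate. -/
lemma bracket_iff (x' : ℕ → ℕ) (hx' : IsZeroOne x') (x : ℝ) (hx : x = assocReal x')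
    (k : ℕ) (hk : 1 ≤ k) :
    BracketPred x k ↔ (x' k = 0 ∧ 0 < T x' k ∧ T x' k < 1) := by
  have hkey : x * 2 ^ k = (N x' k : ℝ) + T x' k := by rw [hx]; exact key x' hx' k
  obtain ⟨M, hM⟩ := parity x' k hk
  have hT0 := T_nonneg x' k
  have hT1 := T_le_one x' hx' k
  rw [bracket_arith x k hk]
  constructor
  · rintro ⟨q, h1, h2⟩
    rw [hkey] at h1 h2
    have hNr : (N x' k : ℝ) = 2 * M + x' k := by exact_mod_cast hM
    rw [hNr] at h1 h2
    rcases hx' k hk with h0 | h0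
    · rw [h0] at h1 h2
      push_cast at h1 h2
      -- 2q < 2M + T < 2q + 1, 0 ≤ T ≤ 1
      have hq1 : (q:ℝ) < M + 1 := by nlinarith
      have hq2 : (M:ℝ) < q + 1 := by nlinarith
      have hqM : q = M := by
        have : q < M + 1 := by exact_mod_cast hq1
        have : M < q + 1 := by exact_mod_cast hq2
        omega
      subst hqM
      refine ⟨h0, by linarith, by linarith⟩
    · exfalso
      rw [h0] at h1 h2
      push_cast at h1 h2
      have hq1 : (M:ℝ) < q := by nlinarith
      have hq2 : (q:ℝ) < M + 1 := by nlinarith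
      have h1' : M < q := by exact_mod_cast hq1
      have h2' : q < M + 1 := by exact_mod_cast hq2
      omega
  · rintro ⟨h0, hT0', hT1'⟩
    refine ⟨M, ?_, ?_⟩ <;> rw [hkey] <;>
      · have hNr : (N x' k : ℝ) = 2 * M + x' k := by exact_mod_cast hM
        rw [hNr, h0]
        push_cast
        linarith

/-- If the tail at a later index is strictly inside `(0,1)`, so is at an earlier index. -/
lemma step (x' : ℕ → ℕ) (hx' : IsZeroOne x') (j k : ℕ) (hjk : j ≤ k)
    (h0 : 0 < T x' k) (h1 : T x' k < 1) : 0 < T x' j ∧ T x' j < 1 := by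
  have hT0 := T_nonneg x' j
  have hT1 := T_le_one x' hx' j
  have hkj := key x' hx' j
  have hkk := key x' hx' k
  have hmul : assocReal x' * 2 ^ j * 2 ^ (k - j) = assocReal x' * 2 ^ k := by
    rw [mul_assoc, ← pow_add]; congr 2; omega
  rw [hkj] at hmul
  -- (N j + T j) * 2^(k-j) = N k + T k
  rcases eq_or_lt_of_le hT0 with he | hlt0
  · exfalso
    have hTj : T x' j = 0 := he.symm
    rw [hTj] at hmul
    have : T x' k = (N x' j * 2 ^ (k - j) : ℕ) - (N x' k : ℕ) := by
      push_cast
      rw [hkk] at hmul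
      linarith
    rw [this] at h0 h1
    have hba : (N x' k : ℝ) < (N x' j * 2 ^ (k - j) : ℕ) := by linarith
    have hab : ((N x' j * 2 ^ (k - j) : ℕ) : ℝ) < N x' k + 1 := by linarith
    have h1' : N x' k < N x' j * 2 ^ (k - j) := by exact_mod_cast hba
    have h2' : N x' j * 2 ^ (k - j) < N x' k + 1 := by exact_mod_cast hab
    omega
  rcases eq_or_lt_of_le hT1 with he | hlt1
  · exfalso
    rw [he] at hmul
    have : T x' k = ((N x' j + 1) * 2 ^ (k - j) : ℕ) - (N x' k : ℕ) := by
      push_cast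
      rw [hkk] at hmul
      linarith
    rw [this] at h0 h1
    have hba : (N x' k : ℝ) < ((N x' j + 1) * 2 ^ (k - j) : ℕ) := by linarith
    have hab : (((N x' j + 1) * 2 ^ (k - j) : ℕ) : ℝ) < N x' k + 1 := by linarith
    have h1' : N x' k < (N x' j + 1) * 2 ^ (k - j) := by exact_mod_cast hba
    have h2' : (N x' j + 1) * 2 ^ (k - j) < N x' k + 1 := by exact_mod_cast hab
    omega
  exact ⟨hlt0, hlt1⟩

end Stmt11Aux

open Stmt11Aux in
/-- For `p ≥ 1`: `x'(4m+1) = 0`, `x'(4m+3) = 1` for all `m` and `x'(p) = 0` iff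
for all `m`, `[x, 4m+1]` holds, `[x, 4m+3]` fails, and `[x, p]` holds. -/
theorem stmt11 (x' : ℕ → ℕ) (hx' : IsZeroOne x') (x : ℝ) (hx : x = assocReal x')
    (p : ℕ) (hp : 1 ≤ p) :
    ((∀ m : ℕ, x' (4 * m + 1) = 0 ∧ x' (4 * m + 3) = 1) ∧ x' p = 0) ↔
      ((∀ m : ℕ, BracketPred x (4 * m + 1) ∧ ¬ BracketPred x (4 * m + 3)) ∧ BracketPred x p) := by
  constructor
  · rintro ⟨halt, hp0⟩
    have hT : ∀ k : ℕ, 0 < T x' k ∧ T x' k < 1 := by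
      intro k
      constructor
      · apply pos_of_one _ (shift_zeroone x' hx' k) (3 * k + 3) (by omega)
        show x' (k + (3 * k + 3)) = 1
        have h : k + (3 * k + 3) = 4 * k + 3 := by ring
        rw [h]; exact (halt k).2
      · apply lt_one_of_zero _ (shift_zeroone x' hx' k) (3 * k + 1) (by omega)
        show x' (k + (3 * k + 1)) = 0
        have h : k + (3 * k + 1) = 4 * k + 1 := by ring
        rw [h]; exact (halt k).1
    refine ⟨fun m => ⟨?_, ?_⟩, ?_⟩
    · exact (bracket_iff x' hx' x hx (4 * m + 1) (by omega)).2 ⟨(halt m).1, hT _⟩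
    · intro hb
      have := ((bracket_iff x' hx' x hx (4 * m + 3) (by omega)).1 hb).1
      have h2 := (halt m).2
      omega
    · exact (bracket_iff x' hx' x hx p hp).2 ⟨hp0, hT _⟩
  · rintro ⟨h1, h2⟩
    refine ⟨fun m => ⟨?_, ?_⟩, ?_⟩
    · exact ((bracket_iff x' hx' x hx (4 * m + 1) (by omega)).1 (h1 m).1).1
    · have hB := ((bracket_iff x' hx' x hx (4 * (m + 1) + 1) (by omega)).1 (h1 (m + 1)).1).2
      have hstep := step x' hx' (4 * m + 3) (4 * (m + 1) + 1) (by omega) hB.1 hB.2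
      by_contra hne
      have h0 : x' (4 * m + 3) = 0 := by rcases hx' (4 * m + 3) (by omega) with h | h <;> omega
      exact (h1 m).2 ((bracket_iff x' hx' x hx (4 * m + 3) (by omega)).2 ⟨h0, hstep⟩)
    · exact ((bracket_iff x' hx' x hx p hp).1 h2).1
end

section
/- Let x' be a 0–1 sequence with associated real x. If for all m ∈ ℕ the predicate [x, 4m+1] holds and the predicate [x, 4m+3] fails, then x' is alternating: x'(4m+1) = 0 and x'(4m+3) = 1 for all m ∈ ℕ. -/
noncomputable def bitR (x' : ℕ → ℕ) (i : ℕ) : ℝ := (x' (i+1) : ℝ) / 2 ^ (i+1)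

def Nnat (x' : ℕ → ℕ) : ℕ → ℕ
  | 0 => 0
  | p+1 => 2 * Nnat x' p + x' (p+1)

lemma bit_nonneg (x' : ℕ → ℕ) (i : ℕ) : 0 ≤ bitR x' i := by
  unfold bitR; positivity

lemma bit_le (x' : ℕ → ℕ) (hx' : IsZeroOne x') (i : ℕ) : bitR x' i ≤ (1/2:ℝ)^(i+1) := by
  unfold bitR
  have h1 : x' (i+1) ≤ 1 := by rcases hx' (i+1) (Nat.succ_le_succ (Nat.zero_le i)) with h | h <;> omega
  rw [div_pow, one_pow]
  apply div_le_div_of_nonneg_right ?_ (by positivity)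
  exact_mod_cast h1

lemma summable_bit (x' : ℕ → ℕ) (hx' : IsZeroOne x') : Summable (bitR x') := by
  apply Summable.of_nonneg_of_le (bit_nonneg x') (fun i => bit_le x' hx' i)
  exact (summable_geometric_two).comp_injective (add_left_injective 1) |>.congr (fun i => rfl)

noncomputable def tailR (x' : ℕ → ℕ) (p : ℕ) : ℝ := ∑' i, bitR x' (i + p)

lemma summable_shift (x' : ℕ → ℕ) (hx' : IsZeroOne x') (p : ℕ) :
    Summable (fun i => bitR x' (i + p)) :=
  (summable_nat_add_iff p).mpr (summable_bit x' hx')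

lemma tail_nonneg (x' : ℕ → ℕ) (p : ℕ) : 0 ≤ tailR x' p :=
  tsum_nonneg (fun i => bit_nonneg x' _)

lemma tail_le (x' : ℕ → ℕ) (hx' : IsZeroOne x') (p : ℕ) : tailR x' p ≤ 1 / 2 ^ p := by
  have h1 : tailR x' p ≤ ∑' i : ℕ, (1/2:ℝ)^(i+p+1) := by
    apply Summable.tsum_le_tsum (fun i => bit_le x' hx' (i+p)) (summable_shift x' hx' p)
    · apply Summable.congr (f := fun i : ℕ => (1/2:ℝ)^i * (1/2:ℝ)^(p+1))
      · exact summable_geometric_two.mul_right _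
      · intro i; rw [← pow_add]; ring_nf
  have h2 : ∑' i : ℕ, (1/2:ℝ)^(i+p+1) = 1 / 2 ^ p := by
    have hc : ∀ i : ℕ, (1/2:ℝ)^(i+p+1) = (1/2:ℝ)^i * (1/2:ℝ)^(p+1) := by
      intro i; rw [← pow_add]; ring_nf
    rw [tsum_congr hc, tsum_mul_right, tsum_geometric_two]
    rw [div_pow, one_pow]
    field_simp
    ring
  linarith

lemma tail_succ (x' : ℕ → ℕ) (hx' : IsZeroOne x') (p : ℕ) :
    tailR x' p = bitR x' p + tailR x' (p+1) := by
  unfold tailR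
  rw [Summable.tsum_eq_zero_add (summable_shift x' hx' p)]
  congr 1
  · simp
  · apply tsum_congr; intro i; congr 1; omega

lemma sum_eq (x' : ℕ → ℕ) (p : ℕ) :
    ∑ i ∈ Finset.range p, bitR x' i = (Nnat x' p : ℝ) / 2 ^ p := by
  induction p with
  | zero => simp [Nnat]
  | succ p ih =>
    rw [Finset.sum_range_succ, ih]
    rw [show Nnat x' (p+1) = 2 * Nnat x' p + x' (p+1) from rfl]
    unfold bitR
    push_cast
    field_simp
    ring

lemma x_eq (x' : ℕ → ℕ) (hx' : IsZeroOne x') (p : ℕ) :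
    assocReal x' = (Nnat x' p : ℝ) / 2 ^ p + tailR x' p := by
  have h0 : assocReal x' = ∑' i, bitR x' i := rfl
  rw [h0, ← Summable.sum_add_tsum_nat_add (f := bitR x') p (summable_bit x' hx'), sum_eq]
  rfl

lemma lemC (x' : ℕ → ℕ) (hx' : IsZeroOne x') (x : ℝ) (hx : x = assocReal x') (p : ℕ)
    (hb : BracketPred x (p+1)) :
    x' (p+1) = 0 ∧ 0 < tailR x' (p+1) ∧ 2^(p+1) * tailR x' (p+1) < 1 := by
  obtain ⟨y, ⟨q, hq⟩, h1, h2⟩ := hb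
  rw [show p + 1 - 1 = p from rfl] at hq
  have hp2 : (0:ℝ) < 2^(p+1) := by positivity
  have hy : y * 2^(p+1) = 2*q := by rw [pow_succ, ← mul_assoc, hq]; ring
  have hA : 2*(q:ℝ) < x*2^(p+1) := by nlinarith
  have hB : x*2^(p+1) < 2*q+1 := by
    have h3 := mul_lt_mul_of_pos_right h2 hp2
    have h4 : (1/2^(p+1):ℝ)*2^(p+1) = 1 := by field_simp
    nlinarith
  have hx2 : x * 2^(p+1) = (Nnat x' (p+1) : ℝ) + 2^(p+1) * tailR x' (p+1) := by
    rw [hx, x_eq x' hx' (p+1)]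
    field_simp
  set t := 2^(p+1) * tailR x' (p+1) with ht
  have ht0 : 0 ≤ t := by
    have := tail_nonneg x' (p+1); positivity
  have ht1 : t ≤ 1 := by
    have := tail_le x' hx' (p+1)
    have := mul_le_mul_of_nonneg_left this (le_of_lt hp2)
    rw [mul_one_div, div_self (ne_of_gt hp2)] at this
    linarith
  set M := Nnat x' (p+1) with hM
  have hM1 : M < 2*q+1 := by
    have : (M:ℝ) < 2*q+1 := by linarith
    exact_mod_cast this
  have hM2 : 2*q < M + 1 := by
    have : (2*q:ℝ) < M + 1 := by linarith
    exact_mod_cast this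
  have hMeq : M = 2*q := by omega
  have hbit : x' (p+1) = 0 := by
    have : M = 2 * Nnat x' p + x' (p+1) := rfl
    rcases hx' (p+1) (Nat.succ_le_succ (Nat.zero_le p)) with h | h
    · exact h
    · omega
  have hMr : (M:ℝ) = 2*q := by exact_mod_cast hMeq
  have htpos : 0 < t := by linarith
  have htlt1 : t < 1 := by linarith
  refine ⟨hbit, ?_, htlt1⟩
  nlinarith [htpos, hp2, ht, tail_nonneg x' (p+1)]

lemma lemD (x' : ℕ → ℕ) (hx' : IsZeroOne x') (x : ℝ) (hx : x = assocReal x') (p : ℕ)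
    (h0 : x' (p+1) = 0) (ht0 : 0 < tailR x' (p+1)) (ht1 : 2^(p+1) * tailR x' (p+1) < 1) :
    BracketPred x (p+1) := by
  have hp2 : (0:ℝ) < 2^(p+1) := by positivity
  refine ⟨(Nnat x' p : ℝ)/2^p, ⟨Nnat x' p, by field_simp; simp⟩, ?_, ?_⟩ <;>
  · have hxy : x - (Nnat x' p : ℝ)/2^p = tailR x' (p+1) := by
      rw [hx, x_eq x' hx' (p+1)]
      rw [show Nnat x' (p+1) = 2 * Nnat x' p + x' (p+1) from rfl, h0]
      push_cast
      field_simp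
      ring
    rw [hxy]
    first
    | exact ht0
    | · rw [lt_div_iff₀ hp2, mul_comm]; exact ht1

/-- If for all `m` the predicate `[x, 4m+1]` holds and `[x, 4m+3]` fails, then `x'`
is alternating. -/
theorem stmt12 (x' : ℕ → ℕ) (hx' : IsZeroOne x') (x : ℝ) (hx : x = assocReal x')
    (h : ∀ m : ℕ, BracketPred x (4 * m + 1) ∧ ¬ BracketPred x (4 * m + 3)) :
    Alternating x' := by
  intro m
  have hC1 := lemC x' hx' x hx (4*m) (h m).1
  constructor
  · exact hC1.1
  · by_contra hne
    have hb0 : x' (4*m+3) = 0 := by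
      rcases hx' (4*m+3) (by omega) with h' | h'
      · exact h'
      · exact absurd h' hne
    -- use BracketPred at 4(m+1)+1 = 4m+5
    have hC2 := lemC x' hx' x hx (4*(m+1)) (h (m+1)).1
    have h5eq : 4*(m+1)+1 = 4*m+5 := by omega
    rw [h5eq] at hC2
    obtain ⟨hb5, ht5pos, ht5lt⟩ := hC2
    -- tail(4m+3) = bit(4m+3) + bit(4m+4) + tail(4m+5)
    have e1 : tailR x' (4*m+3) = bitR x' (4*m+3) + bitR x' (4*m+4) + tailR x' (4*m+5) := by
      rw [tail_succ x' hx' (4*m+3), tail_succ x' hx' (4*m+4)]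
      ring_nf
    have hb4z : bitR x' (4*m+4) = 0 := by
      unfold bitR
      rw [show 4*m+4+1 = 4*m+5 from rfl, hb5]
      simp
    have hbit3le : bitR x' (4*m+3) ≤ 1/2^(4*m+4) := by
      have := bit_le x' hx' (4*m+3)
      rw [div_pow, one_pow] at this
      exact this
    have htail5le : tailR x' (4*m+5) < 1/2^(4*m+5) := by
      have hp5 : (0:ℝ) < 2^(4*m+5) := by positivity
      rw [lt_div_iff₀ hp5]
      linarith [ht5lt]
    have htpos : 0 < tailR x' (4*m+3) := by
      rw [e1]
      have := bit_nonneg x' (4*m+3)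
      have := bit_nonneg x' (4*m+4)
      linarith
    have htlt : 2^(4*m+3) * tailR x' (4*m+3) < 1 := by
      rw [e1, hb4z]
      have e2 : (2:ℝ)^(4*m+4) = 2^(4*m+3) * 2 := by rw [← pow_succ]
      have e3 : (2:ℝ)^(4*m+5) = 2^(4*m+3) * 4 := by rw [show 4*m+5 = (4*m+3)+2 from rfl, pow_add]; norm_num
      have hp3 : (0:ℝ) < 2^(4*m+3) := by positivity
      have b1 : bitR x' (4*m+3) ≤ 1/(2^(4*m+3)*2) := by rw [← e2]; exact hbit3le
      have b2 : tailR x' (4*m+5) < 1/(2^(4*m+3)*4) := by rw [← e3]; exact htail5le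
      have c1 : 2^(4*m+3) * bitR x' (4*m+3) ≤ 1/2 := by
        have := mul_le_mul_of_nonneg_left b1 (le_of_lt hp3)
        rw [mul_one_div] at this
        calc 2^(4*m+3) * bitR x' (4*m+3) ≤ 2^(4*m+3) / (2^(4*m+3)*2) := this
          _ = 1/2 := by field_simp
      have c2 : 2^(4*m+3) * tailR x' (4*m+5) < 1/4 := by
        have := mul_lt_mul_of_pos_left b2 hp3
        rw [mul_one_div] at this
        calc 2^(4*m+3) * tailR x' (4*m+5) < 2^(4*m+3) / (2^(4*m+3)*4) := this
          _ = 1/4 := by field_simp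
      nlinarith
    have hD := lemD x' hx' x hx (4*m+2) hb0 htpos htlt
    exact (h m).2 hD
end

section
/- Let x' be an alternating 0–1 sequence with associated real x. Then for every p ≥ 1: x'(p) = 0 if and only if the predicate [x, p] holds. (Thus, under the alternation condition, each binary digit of x is determined by a first-order ordered-ring property of the real number x.) -/
/-- If `x'` is alternating, then for every `p ≥ 1`, `x'(p) = 0` iff `[x, p]` holds. -/
theorem stmt13 (x' : ℕ → ℕ) (hx' : IsZeroOne x') (x : ℝ) (hx : x = assocReal x')
    (halt : Alternating x') :
    ∀ p : ℕ, 1 ≤ p → (x' p = 0 ↔ BracketPred x p) := by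
  set f : ℕ → ℝ := fun k => (x' (k + 1) : ℝ) / 2 ^ (k + 1) with hf
  have hfnn : ∀ k, 0 ≤ f k := fun k => by positivity
  have hfle : ∀ k, f k ≤ (1 / 2 : ℝ) ^ (k + 1) := by
    intro k
    have h1 : (x' (k + 1) : ℝ) ≤ 1 := by
      rcases hx' (k + 1) (Nat.le_add_left 1 k) with h | h <;> simp [h]
    calc f k = (x' (k + 1) : ℝ) / 2 ^ (k + 1) := rfl
      _ ≤ 1 / 2 ^ (k + 1) := by gcongr
      _ = (1 / 2 : ℝ) ^ (k + 1) := by rw [div_pow, one_pow]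
  have hgsum : Summable (fun k : ℕ => (1 / 2 : ℝ) ^ (k + 1)) :=
    (summable_nat_add_iff 1).mpr summable_geometric_two
  have hsum : Summable f := Summable.of_nonneg_of_le hfnn hfle hgsum
  have hsumtail : ∀ n : ℕ, Summable (fun k => f (k + n)) :=
    fun n => (summable_nat_add_iff n).mpr hsum
  -- geometric tail value
  have hgeo : ∀ n : ℕ, (∑' k : ℕ, (1 / 2 : ℝ) ^ (k + n + 1)) = (1 / 2) ^ n := by
    intro n
    have h1 : ∀ k : ℕ, (1 / 2 : ℝ) ^ (k + n + 1) = (1 / 2) ^ k * (1 / 2) ^ (n + 1) := by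
      intro k; rw [← pow_add, Nat.add_assoc]
    simp_rw [h1]
    rw [tsum_mul_right, tsum_geometric_two]
    rw [pow_succ]; ring
  have htail_pos : ∀ n : ℕ, 0 < ∑' k : ℕ, f (k + n) := by
    intro n
    refine Summable.tsum_pos (hsumtail n) (fun k => hfnn _) (3 * n + 2) ?_
    have h1 : x' (3 * n + 2 + n + 1) = 1 := by
      have := (halt n).2
      have he : 3 * n + 2 + n + 1 = 4 * n + 3 := by omega
      rw [he]; exact this
    show 0 < f (3 * n + 2 + n)
    rw [hf]
    simp only [h1]
    positivity
  have htail_lt : ∀ n : ℕ, (∑' k : ℕ, f (k + n)) < (1 / 2 : ℝ) ^ n := by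
    intro n
    have h0 : x' (3 * n + n + 1) = 0 := by
      have := (halt n).1
      have he : 3 * n + n + 1 = 4 * n + 1 := by omega
      rw [he]; exact this
    have hlt : f (3 * n + n) < (1 / 2 : ℝ) ^ (3 * n + n + 1) := by
      rw [hf]; simp only [h0]
      norm_num
    calc (∑' k : ℕ, f (k + n)) < ∑' k : ℕ, (1 / 2 : ℝ) ^ (k + n + 1) := by
          refine Summable.tsum_lt_tsum (i := 3 * n) (fun k => hfle (k + n)) ?_ (hsumtail n)
            ((summable_nat_add_iff (n + 1)).mpr summable_geometric_two)
          exact hlt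
      _ = (1 / 2) ^ n := hgeo n
  have hdecomp : ∀ n : ℕ, (∑ i ∈ Finset.range n, f i) + (∑' k : ℕ, f (k + n)) = x := by
    intro n
    rw [hx]
    exact hsum.sum_add_tsum_nat_add n
  have hhalf : ∀ n : ℕ, ((1 : ℝ) / 2) ^ n = 1 / 2 ^ n := fun n => by
    rw [div_pow, one_pow]
  -- rationality of partial sums
  have hL : ∀ n : ℕ, (∑ i ∈ Finset.range n, f i) * 2 ^ n
      = ((∑ i ∈ Finset.range n, x' (i + 1) * 2 ^ (n - 1 - i) : ℕ) : ℝ) := by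
    intro n
    rw [Finset.sum_mul]
    push_cast
    refine Finset.sum_congr rfl ?_
    intro i hi
    have hi' : i < n := Finset.mem_range.mp hi
    have h2 : ((2 : ℝ) ^ (n - 1 - i)) * 2 ^ (i + 1) = 2 ^ n := by
      rw [← pow_add]; congr 1; omega
    have hne : (2 : ℝ) ^ (i + 1) ≠ 0 := by positivity
    rw [hf]
    field_simp
    rw [← h2]; ring
  intro p hp
  obtain ⟨q, rfl⟩ : ∃ q, p = q + 1 := ⟨p - 1, (Nat.succ_pred_eq_of_pos hp).symm⟩
  have hsplit : (∑' k : ℕ, f (k + q)) = f q + ∑' k : ℕ, f (k + (q + 1)) := by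
    rw [Summable.tsum_eq_zero_add (hsumtail q)]
    congr 1
    · simp
    · refine tsum_congr (fun k => ?_)
      congr 1; omega
  have hxq : x = (∑ i ∈ Finset.range q, f i) + f q + ∑' k : ℕ, f (k + (q + 1)) := by
    rw [← hdecomp q, hsplit]; ring
  have htp := htail_pos (q + 1)
  have htl := htail_lt (q + 1)
  rw [hhalf] at htl
  constructor
  · intro h0
    refine ⟨∑ i ∈ Finset.range q, f i,
      ⟨∑ i ∈ Finset.range q, x' (i + 1) * 2 ^ (q - 1 - i), by simpa using hL q⟩, ?_, ?_⟩
    · have hfq : f q = 0 := by rw [hf]; simp [h0]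
      rw [hxq, hfq]
      simpa using htp
    · have hfq : f q = 0 := by rw [hf]; simp [h0]
      rw [hxq, hfq]
      simpa using htl
  · intro ⟨y, ⟨r, hyr⟩, h2, h3⟩
    rcases hx' (q + 1) (Nat.le_add_left 1 q) with h0 | h1
    · exact h0
    exfalso
    simp only [Nat.add_sub_cancel] at hyr
    have hfq : f q = 1 / 2 ^ (q + 1) := by rw [hf]; simp [h1]
    set L := ∑ i ∈ Finset.range q, f i with hLdef
    set t := ∑' k : ℕ, f (k + (q + 1)) with htdef
    set N : ℕ := ∑ i ∈ Finset.range q, x' (i + 1) * 2 ^ (q - 1 - i) with hNdef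
    have hLN : L * 2 ^ q = (N : ℝ) := hL q
    have hP : (0 : ℝ) < 2 ^ q := by positivity
    have h2P : (2 : ℝ) ^ (q + 1) = 2 * 2 ^ q := by rw [pow_succ]; ring
    rcases le_or_gt r N with hrN | hNr
    · have hyL : y ≤ L := by
        have : y * 2 ^ q ≤ L * 2 ^ q := by
          rw [hyr, hLN]; exact_mod_cast hrN
        exact le_of_mul_le_mul_right this hP
      have : x - y ≥ f q + t := by rw [hxq]; linarith
      rw [hfq] at this
      linarith
    · have hr1 : (N : ℝ) + 1 ≤ r := by exact_mod_cast hNr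
      have hyL : L + 1 / 2 ^ q ≤ y := by
        have h4 : L * 2 ^ q + 1 ≤ y * 2 ^ q := by rw [hyr, hLN]; linarith
        have h5 : 1 / 2 ^ q ≤ y - L := by
          rw [div_le_iff₀ hP]
          nlinarith
        linarith
      have hinv : (1 : ℝ) / 2 ^ q = 2 * (1 / 2 ^ (q + 1)) := by
        rw [h2P]; field_simp
      rw [hinv] at hyL
      have hxval : x = L + 1 / 2 ^ (q + 1) + t := by rw [hxq, hfq]
      linarith
end

section
/- Let x' and y' be alternating 0–1 sequences whose associated reals are equal. Then x'(i) = y'(i) for every i ≥ 1. (A real number has at most one binary expansion satisfying the alternation condition.) -/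
lemma aux_summable_geom (c : ℕ) : Summable (fun j : ℕ => (1:ℝ) / 2 ^ (j + c)) := by
  have h : Summable (fun j : ℕ => (1/2:ℝ) ^ j) :=
    summable_geometric_of_lt_one (by norm_num) (by norm_num)
  have := h.mul_left ((1:ℝ) / 2 ^ c)
  refine this.congr fun j => ?_
  rw [pow_add]
  field_simp
  rw [← mul_pow]; norm_num

lemma aux_summable (x' : ℕ → ℕ) (hx' : IsZeroOne x') :
    Summable (fun i : ℕ => (x' (i + 1) : ℝ) / 2 ^ (i + 1)) := by
  refine Summable.of_nonneg_of_le (fun i => by positivity) (fun i => ?_) (aux_summable_geom 1)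
  have : x' (i + 1) ≤ 1 := by rcases hx' (i+1) (by omega) with h | h <;> omega
  have h2 : (x' (i+1) : ℝ) ≤ 1 := by exact_mod_cast this
  apply div_le_div_of_nonneg_right h2 (by positivity) |>.trans_eq rfl

lemma key (x' y' : ℕ → ℕ) (hx' : IsZeroOne x') (hy' : IsZeroOne y')
    (halty : Alternating y') (heq : assocReal x' = assocReal y') (n : ℕ)
    (hprev : ∀ k, k < n → x' (k+1) = y' (k+1))
    (hxn : x' (n+1) = 1) (hyn : y' (n+1) = 0) : False := by
  have hsx := aux_summable x' hx'
  have hsy := aux_summable y' hy'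
  set g : ℕ → ℝ := fun i => (y' (i+1) : ℝ) / 2 ^ (i+1) - (x' (i+1) : ℝ) / 2 ^ (i+1) with hg
  have hsg : Summable g := hsy.sub hsx
  have htsum : ∑' i, g i = 0 := by
    have h0 : ∑' i, g i = assocReal y' - assocReal x' := by
      rw [hg]; exact Summable.tsum_sub hsy hsx
    rw [h0, heq, sub_self]
  have hsplit := Summable.sum_add_tsum_nat_add (n+1) hsg
  have hsum : ∑ i ∈ Finset.range (n+1), g i = -(1 / 2 ^ (n+1)) := by
    rw [Finset.sum_eq_single_of_mem n (Finset.self_mem_range_succ n)]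
    · simp [hg, hxn, hyn]
    · intro i hi hin
      have : i < n := by simp at hi; omega
      simp [hg, hprev i this]
  have htail : ∑' j, g (j + (n+1)) = 1 / 2 ^ (n+1) := by
    rw [htsum] at hsplit
    linarith [hsplit, hsum]
  -- strict bound on the tail
  have hle : ∀ j : ℕ, g (j + (n+1)) ≤ 1 / 2 ^ (j + n + 2) := by
    intro j
    have h1 : y' (j + (n+1) + 1) ≤ 1 := by
      rcases hy' (j + (n+1) + 1) (by omega) with h | h <;> omega
    have h1' : (y' (j + (n+1) + 1) : ℝ) ≤ 1 := by exact_mod_cast h1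
    have h : g (j + (n+1)) ≤ (1:ℝ) / 2 ^ (j + (n+1) + 1) := by
      simp only [hg]
      have hx0 : (0:ℝ) ≤ (x' (j + (n+1) + 1) : ℝ) / 2 ^ (j + (n+1) + 1) := by positivity
      have hyb : (y' (j + (n+1) + 1) : ℝ) / 2 ^ (j + (n+1) + 1)
          ≤ 1 / 2 ^ (j + (n+1) + 1) := by gcongr
      linarith
    simpa [show j + (n+1) + 1 = j + n + 2 by omega] using h
  -- index where y' = 0 : 4*(n+1)+1 = 4n+5 = (3n+3) + (n+1) + 1
  have hstrict : g (3*n+3 + (n+1)) < 1 / 2 ^ (3*n+3 + n + 2) := by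
    have hy0 : y' (3*n+3 + (n+1) + 1) = 0 := by
      have := (halty (n+1)).1
      have he : 4 * (n+1) + 1 = 3*n+3 + (n+1) + 1 := by omega
      rwa [he] at this
    have h2 : (0:ℝ) ≤ (x' (3*n+3 + (n+1) + 1) : ℝ) := by positivity
    have hle0 : g (3*n+3 + (n+1)) ≤ 0 := by
      simp only [hg, hy0, Nat.cast_zero, zero_div, zero_sub, neg_nonpos]
      positivity
    have hpos : (0:ℝ) < 1 / 2 ^ (3*n+3 + n + 2) := by positivity
    exact lt_of_le_of_lt hle0 hpos
  have hsg' : Summable (fun j => g (j + (n+1))) := hsg.comp_injective (add_left_injective (n+1))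
  have hlt : ∑' j, g (j + (n+1)) < ∑' j : ℕ, (1:ℝ) / 2 ^ (j + n + 2) := by
    refine Summable.tsum_lt_tsum hle hstrict hsg' ?_
    have := aux_summable_geom (n+2)
    refine this.congr fun j => by rw [show j + (n+2) = j + n + 2 by omega]
  have hgeo : ∑' j : ℕ, (1:ℝ) / 2 ^ (j + n + 2) = 1 / 2 ^ (n+1) := by
    have h1 : ∀ j : ℕ, (1:ℝ) / 2 ^ (j + n + 2) = (1 / 2 ^ (n+2)) * (1/2)^j := by
      intro j
      rw [show j + n + 2 = j + (n+2) by omega, pow_add]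
      field_simp
      rw [← mul_pow]; norm_num
    rw [tsum_congr h1, tsum_mul_left, tsum_geometric_two]
    rw [pow_succ]
    field_simp
  rw [htail, hgeo] at hlt
  exact lt_irrefl _ hlt


/-- Two alternating 0–1 sequences with the same associated real agree at every
index `i ≥ 1`. -/
theorem stmt14 (x' y' : ℕ → ℕ) (hx' : IsZeroOne x') (hy' : IsZeroOne y')
    (haltx : Alternating x') (halty : Alternating y')
    (heq : assocReal x' = assocReal y') :
    ∀ i, 1 ≤ i → x' i = y' i := by
  suffices h : ∀ n, x' (n+1) = y' (n+1) by
    intro i hi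
    cases i with
    | zero => omega
    | succ n => exact h n
  intro n
  induction n using Nat.strong_induction_on with
  | _ n ih =>
    rcases hx' (n+1) (by omega) with h1 | h1 <;> rcases hy' (n+1) (by omega) with h2 | h2
    · rw [h1, h2]
    · exact absurd (key y' x' hy' hx' haltx heq.symm n
        (fun k hk => (ih k hk).symm) h2 h1) (fun f => f)
    · exact absurd (key x' y' hx' hy' halty heq n ih h1 h2) (fun f => f)
    · rw [h1, h2]
end

section
/- Fix a function e : ℕ×ℕ → ℕ which is a bijection from ℕ×ℕ onto the positive integers. Let α : ℕ → ℕ and let u' be a 0–1 sequence with associated real u such that u'(4m+1) = 0 and u'(4m+3) = 1 for every m ∈ ℕ, and for all k, m ∈ ℕ, u'(2·e(k,m)) = 1 if and only if α(k) = m. Then for all k, m ∈ ℕ: α(k) = m if and only if ([u, 4p+1] holds and [u, 4p+3] fails for every p ∈ ℕ, and [u, 2·e(k,m)] fails). -/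
/-- The tail of the binary expansion after position `n`. -/
noncomputable def tailSum (x' : ℕ → ℕ) (n : ℕ) : ℝ :=
  ∑' i : ℕ, (x' (n + 1 + i) : ℝ) / 2 ^ (i + 1)

lemma summable_half : Summable fun i : ℕ => (1 : ℝ) / 2 ^ (i + 1) := by
  refine (summable_geometric_two.mul_right (1/2 : ℝ)).congr (fun i => ?_)
  rw [pow_succ]; field_simp
  rw [← mul_pow]; norm_num

lemma tsum_half : ∑' i : ℕ, (1 : ℝ) / 2 ^ (i + 1) = 1 := by
  calc ∑' i : ℕ, (1 : ℝ) / 2 ^ (i + 1) = ∑' i : ℕ, (1:ℝ) / 2 / 2 ^ i :=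
        tsum_congr (fun i => by rw [pow_succ]; ring)
    _ = 1 := tsum_geometric_two' 1

lemma summable_aux (x' : ℕ → ℕ) (hx : IsZeroOne x') (n : ℕ) :
    Summable fun i : ℕ => (x' (n + 1 + i) : ℝ) / 2 ^ (i + 1) := by
  refine Summable.of_nonneg_of_le (fun i => by positivity) (fun i => ?_) summable_half
  have : x' (n + 1 + i) ≤ 1 := by
    rcases hx (n + 1 + i) (by omega) with h | h <;> omega
  gcongr
  exact_mod_cast this

lemma tail_pos (x' : ℕ → ℕ) (hx : IsZeroOne x') (halt : Alternating x') (n : ℕ) :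
    0 < tailSum x' n := by
  refine Summable.tsum_pos (summable_aux x' hx n) (fun i => by positivity) (3 * n + 2) ?_
  have h1 : x' (n + 1 + (3 * n + 2)) = 1 := by
    have := (halt n).2
    have he : n + 1 + (3 * n + 2) = 4 * n + 3 := by omega
    rw [he]; exact this
  rw [h1]; positivity

lemma tail_lt_one (x' : ℕ → ℕ) (hx : IsZeroOne x') (halt : Alternating x') (n : ℕ) :
    tailSum x' n < 1 := by
  rw [← tsum_half]
  refine Summable.tsum_lt_tsum (i := 3 * n) (fun i => ?_) ?_ (summable_aux x' hx n) summable_half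
  · have : x' (n + 1 + i) ≤ 1 := by
      rcases hx (n + 1 + i) (by omega) with h | h <;> omega
    gcongr
    exact Nat.cast_le_one.mpr this
  · have h0 : x' (n + 1 + 3 * n) = 0 := by
      have := (halt n).1
      have he : n + 1 + 3 * n = 4 * n + 1 := by omega
      rw [he]; exact this
    rw [h0]
    simp only [Nat.cast_zero, zero_div]
    positivity

lemma tail_rec (x' : ℕ → ℕ) (hx : IsZeroOne x') (n : ℕ) :
    tailSum x' n = (x' (n + 1) : ℝ) / 2 + tailSum x' (n + 1) / 2 := by
  unfold tailSum
  rw [Summable.tsum_eq_zero_add (summable_aux x' hx n)]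
  congr 1
  · norm_num
  · rw [← tsum_div_const]
    refine tsum_congr fun i => ?_
    have he : n + 1 + (i + 1) = n + 1 + 1 + i := by omega
    rw [he, pow_succ]
    ring

lemma assoc_split (x' : ℕ → ℕ) (hx : IsZeroOne x') (n : ℕ) :
    assocReal x' * 2 ^ n
      = (∑ i ∈ Finset.range n, (x' (i + 1) : ℝ) * 2 ^ (n - 1 - i)) + tailSum x' n := by
  have hs : Summable fun i : ℕ => (x' (i + 1) : ℝ) / 2 ^ (i + 1) := by
    refine (summable_aux x' hx 0).congr fun i => ?_
    rw [show 0 + 1 + i = i + 1 by omega]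
  have hsplit := Summable.sum_add_tsum_nat_add n hs
  have htail : ∑' i : ℕ, (x' (i + n + 1) : ℝ) / 2 ^ (i + n + 1) = tailSum x' n / 2 ^ n := by
    unfold tailSum
    rw [← tsum_div_const]
    refine tsum_congr fun i => ?_
    rw [show n + 1 + i = i + n + 1 by omega]
    rw [show i + n + 1 = (i + 1) + n by omega, pow_add]
    ring
  rw [assocReal, ← hsplit, htail]
  rw [add_mul, div_mul_cancel₀ _ (by positivity : (2:ℝ)^n ≠ 0)]
  congr 1
  rw [Finset.sum_mul]
  refine Finset.sum_congr rfl fun i hi => ?_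
  have hi' : i < n := Finset.mem_range.mp hi
  have : (2:ℝ) ^ (n - 1 - i) * 2 ^ (i + 1) = 2 ^ n := by
    rw [← pow_add]
    congr 1
    omega
  field_simp
  rw [← this]
  ring

/-- The key characterization: for an alternating 0-1 sequence, the bracket
predicate at `p ≥ 1` holds iff the `p`-th digit is `0`. -/
lemma bracket_key (x' : ℕ → ℕ) (hx : IsZeroOne x') (halt : Alternating x')
    (p : ℕ) (hp : 1 ≤ p) : BracketPred (assocReal x') p ↔ x' p = 0 := by
  obtain ⟨n, rfl⟩ : ∃ n, p = n + 1 := ⟨p - 1, by omega⟩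
  set N : ℕ := ∑ i ∈ Finset.range n, x' (i + 1) * 2 ^ (n - 1 - i) with hN
  have hNcast : (N : ℝ) = ∑ i ∈ Finset.range n, (x' (i + 1) : ℝ) * 2 ^ (n - 1 - i) := by
    push_cast [hN]; rfl
  have hsplit : assocReal x' * 2 ^ n = (N : ℝ) + tailSum x' n := by
    rw [hNcast]; exact assoc_split x' hx n
  have hrec := tail_rec x' hx n
  have ht1pos := tail_pos x' hx halt (n + 1)
  have ht1lt := tail_lt_one x' hx halt (n + 1)
  have h2n : (0:ℝ) < 2 ^ n := by positivity
  constructor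
  · rintro ⟨y, ⟨q, hq⟩, h1, h2⟩
    by_contra h0
    have hx1 : x' (n + 1) = 1 := by rcases hx (n + 1) (by omega) with h | h <;> omega
    have htail : tailSum x' n = 1 / 2 + tailSum x' (n + 1) / 2 := by
      rw [hrec, hx1]; norm_num
    have hy : y = (q : ℝ) / 2 ^ n := by
      field_simp
      simpa using hq
    have hu : assocReal x' * 2 ^ n = (N : ℝ) + (1/2 + tailSum x' (n+1)/2) := by
      rw [hsplit, htail]
    have hgt : (N : ℝ) < q := by
      have := h2
      rw [hy] at this
      have h2' : (assocReal x' - (q:ℝ)/2^n) * 2^n < (1 / 2 ^ (n+1)) * 2 ^ n :=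
        mul_lt_mul_of_pos_right this h2n
      rw [sub_mul, div_mul_cancel₀ _ (ne_of_gt h2n)] at h2'
      have hpow : (1 / 2 ^ (n+1) : ℝ) * 2 ^ n = 1 / 2 := by
        rw [pow_succ]; field_simp
      rw [hpow, hu] at h2'
      nlinarith
    have hlt : (q : ℝ) < (N : ℝ) + 1 := by
      have := h1
      rw [hy] at this
      have h1' : 0 < (assocReal x' - (q:ℝ)/2^n) * 2^n := mul_pos this h2n
      rw [sub_mul, div_mul_cancel₀ _ (ne_of_gt h2n), hu] at h1'
      nlinarith
    have hq1 : N < q := by exact_mod_cast hgt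
    have hq2 : q < N + 1 := by exact_mod_cast hlt
    omega
  · intro h0
    refine ⟨(N : ℝ) / 2 ^ n, ⟨N, by simp⟩, ?_, ?_⟩
    · have heq : assocReal x' - (N:ℝ)/2^n = tailSum x' n / 2 ^ n := by
        field_simp
        linarith [hsplit]
      rw [heq]
      have : 0 < tailSum x' n := tail_pos x' hx halt n
      positivity
    · have heq : assocReal x' - (N:ℝ)/2^n = tailSum x' n / 2 ^ n := by
        field_simp
        linarith [hsplit]
      rw [heq]
      have htail : tailSum x' n = tailSum x' (n + 1) / 2 := by
        rw [hrec, h0]; norm_num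
      rw [htail, div_lt_div_iff₀ (by positivity) (by positivity)]
      rw [pow_succ]
      nlinarith

/-- Under the coding conditions, `α(k) = m` holds iff the real code `u` satisfies
the ordered-ring condition: `[u, 4p+1]` holds and `[u, 4p+3]` fails for every `p`,
and `[u, 2·e(k,m)]` fails. -/
theorem stmt16 (e : ℕ × ℕ → ℕ) (hinj : Function.Injective e)
    (hrange : Set.range e = {n : ℕ | 1 ≤ n})
    (α : ℕ → ℕ) (u' : ℕ → ℕ) (hu' : IsZeroOne u') (u : ℝ) (hu : u = assocReal u')
    (halt : Alternating u')
    (hcode : ∀ k m : ℕ, u' (2 * e (k, m)) = 1 ↔ α k = m) :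
    ∀ k m : ℕ, α k = m ↔
      ((∀ p : ℕ, BracketPred u (4 * p + 1) ∧ ¬ BracketPred u (4 * p + 3)) ∧
        ¬ BracketPred u (2 * e (k, m))) := by
  intro k m
  subst hu
  have he1 : 1 ≤ e (k, m) := by
    have : e (k, m) ∈ Set.range e := ⟨(k, m), rfl⟩
    rw [hrange] at this
    exact this
  have hkey := fun (p : ℕ) (hp : 1 ≤ p) => bracket_key u' hu' halt p hp
  constructor
  · intro hkm
    refine ⟨fun p => ⟨?_, ?_⟩, ?_⟩
    · rw [hkey (4 * p + 1) (by omega)]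
      exact (halt p).1
    · rw [hkey (4 * p + 3) (by omega)]
      have := (halt p).2
      omega
    · rw [hkey (2 * e (k, m)) (by omega)]
      have := (hcode k m).mpr hkm
      omega
  · rintro ⟨-, hb⟩
    rw [hkey (2 * e (k, m)) (by omega)] at hb
    have := hu' (2 * e (k, m)) (by omega)
    exact (hcode k m).mp (by omega)
end
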